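/- arXiv:2602.08694 — 4 statements merged into one kernel-verified Lean document; each statement's English description precedes it below -/
import Mathlib

section
/- Let S be a finite poset and D : S → FinSet a diagram, and let 𝒟 be the corresponding sheaf on the Alexandrov space X_S. Then the étale space of 𝒟 (the disjoint union of stalks ⨆_{x} 𝒟_x, topologized by the basis of sets U_v = { germ of v at x : x ∈ U } for open U and v ∈ 𝒟(U)) is homeomorphic to the Alexandrov space of the completion poset S^D. -/
/-- Let `S` be a finite poset and `D` a diagram of finite sets on `S`,
with corresponding sheaf `𝒟` on the Alexandrov space `X_S` (the sections of `𝒟` on an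
upper set `U` are the compatible families `v` of elements of the stalks `D s`, `s ∈ U`).
The étale space of `𝒟` has underlying set `Σ s, D s` (disjoint union of stalks) and
topology generated by the basic sets `U_v = { (s, v s) : s ∈ U }` for `U` open and `v`
a section on `U`.  This topology coincides with the Alexandrov topology of the
completion poset `S^D`, i.e. the topology whose open sets are the upper sets of the
completion order `(s₁,d₁) ≤ (s₂,d₂) ↔ s₁ ≤ s₂ ∧ D(s₁≤s₂)(d₁) = d₂`; in particular the
two spaces are homeomorphic (via the identity). -/
theorem stmt_10 (S : Type) [Fintype S] [PartialOrder S]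
    (D : S → Type) [∀ s, Fintype (D s)]
    (Dmap : ∀ {s t : S}, s ≤ t → D s → D t)
    (Did : ∀ (s : S) (x : D s), Dmap le_rfl x = x)
    (Dcomp : ∀ {s t u : S} (h1 : s ≤ t) (h2 : t ≤ u) (x : D s),
      Dmap h2 (Dmap h1 x) = Dmap (h1.trans h2) x) :
    TopologicalSpace.generateFrom
      {B : Set (Σ s : S, D s) |
        ∃ (U : Set S) (hU : IsUpperSet U) (v : ∀ s ∈ U, D s),
          (∀ (s t : S) (hs : s ∈ U) (h : s ≤ t), Dmap h (v s hs) = v t (hU h hs)) ∧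
          B = {p : Σ s : S, D s | ∃ hs : p.1 ∈ U, p.2 = v p.1 hs}} =
    TopologicalSpace.generateFrom
      {J : Set (Σ s : S, D s) |
        ∀ p ∈ J, ∀ q : Σ s : S, D s, ∀ h : p.1 ≤ q.1, Dmap h p.2 = q.2 → q ∈ J} := by
  apply le_antisymm
  · rw [TopologicalSpace.le_generateFrom_iff_subset_isOpen]
    intro J hJ
    have : J = ⋃ p ∈ J, {q : Σ s : S, D s | ∃ h : p.1 ≤ q.1, q.2 = Dmap h p.2} := by
      ext q
      simp only [Set.mem_iUnion, Set.mem_setOf_eq]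
      constructor
      · intro hq; exact ⟨q, hq, le_rfl, (Did _ _).symm⟩
      · rintro ⟨p, hp, h, hq⟩
        exact hJ p hp q h hq.symm
    rw [this]
    simp only [Set.mem_setOf_eq]
    rw [show (⋃ p ∈ J, {q : Σ s : S, D s | ∃ h : p.1 ≤ q.1, q.2 = Dmap h p.2}) =
        ⋃₀ ((fun p : Σ s : S, D s =>
          {q : Σ s : S, D s | ∃ h : p.1 ≤ q.1, q.2 = Dmap h p.2}) '' J) from
      (Set.sUnion_image _ _).symm]
    apply TopologicalSpace.GenerateOpen.sUnion
    rintro B ⟨p, hp, rfl⟩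
    apply TopologicalSpace.GenerateOpen.basic
    refine ⟨{t | p.1 ≤ t}, fun a b hab ha => ha.trans hab, fun t h => Dmap h p.2,
      fun s t hs h => Dcomp hs h p.2, rfl⟩
  · rw [TopologicalSpace.le_generateFrom_iff_subset_isOpen]
    rintro B ⟨U, hU, v, hcompat, rfl⟩
    apply TopologicalSpace.GenerateOpen.basic
    rintro p ⟨hs, hp⟩ q h hq
    exact ⟨hU h hs, by rw [← hq, hp, hcompat p.1 q.1 hs h]⟩
end

section
/- Let P be a geometric simplicial poset (a finite poset in which every lower cone P_{≤p} is isomorphic to a Boolean lattice minus its bottom element, equivalently P ∪ {0̂} is simplicial) and D a FinSet-valued diagram on the dual poset P*. Then the inflation P_D = ((P*)^D)* is also a geometric simplicial poset; in fact, for every d ∈ D(q) the lower cone (P_D)_{≤d} is order-isomorphic to P_{≤q}. -/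
/-- Let `P` be a geometric simplicial poset: a finite poset in which every
lower cone `P_{≤p}` is isomorphic to a Boolean lattice minus its bottom element (i.e. to
the poset of nonempty subsets of a finite set).  Let `D` be a diagram of finite sets on
the dual poset `P*` (structure maps `Dmap : p ≤ q → D q → D p`, functorial), and let
`le'` be the order of the inflation `P_D = ((P*)^D)*` on `Σ p, D p`:
`(p₁,d₁) ≤ (p₂,d₂) ↔ p₁ ≤ p₂ ∧ Dmap _ d₂ = d₁`.  Then for every `q` and `d ∈ D q` the
lower cone of `(q,d)` in `P_D` is order-isomorphic to the lower cone `P_{≤q}`; in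
particular it is isomorphic to a Boolean lattice minus its bottom, so `P_D` is again a
geometric simplicial poset. -/
theorem stmt_11 (P : Type) [Fintype P] [PartialOrder P]
    (hP : ∀ p : P, ∃ m : ℕ,
      Nonempty ({q : P // q ≤ p} ≃o {A : Finset (Fin m) // A.Nonempty}))
    (D : P → Type) [∀ p, Fintype (D p)]
    (Dmap : ∀ {p q : P}, p ≤ q → D q → D p)
    (Did : ∀ (p : P) (x : D p), Dmap le_rfl x = x)
    (Dcomp : ∀ {p q r : P} (h1 : p ≤ q) (h2 : q ≤ r) (x : D r),
      Dmap h1 (Dmap h2 x) = Dmap (h1.trans h2) x)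
    (le' : (Σ p : P, D p) → (Σ p : P, D p) → Prop)
    (hle' : ∀ a b : Σ p : P, D p, le' a b ↔ ∃ h : a.1 ≤ b.1, Dmap h b.2 = a.2) :
    ∀ (q : P) (d : D q),
      Nonempty ((fun a b : {x : Σ p : P, D p // le' x ⟨q, d⟩} => le' a.1 b.1) ≃r
        (fun a b : {p : P // p ≤ q} => a.1 ≤ b.1)) ∧
      ∃ m : ℕ,
        Nonempty ((fun a b : {x : Σ p : P, D p // le' x ⟨q, d⟩} => le' a.1 b.1) ≃r
          (fun a b : {A : Finset (Fin m) // A.Nonempty} => a.1 ⊆ b.1)) := by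
  intro q d
  have hval : ∀ (x : {x : Σ p : P, D p // le' x ⟨q, d⟩}), x.1.1 ≤ q :=
    fun x => ((hle' _ _).1 x.2).elim fun h _ => h
  let e : (fun a b : {x : Σ p : P, D p // le' x ⟨q, d⟩} => le' a.1 b.1) ≃r
      (fun a b : {p : P // p ≤ q} => a.1 ≤ b.1) :=
  { toFun := fun x => ⟨x.1.1, hval x⟩
    invFun := fun p => ⟨⟨p.1, Dmap p.2 d⟩, (hle' _ _).2 ⟨p.2, rfl⟩⟩
    left_inv := by
      rintro ⟨⟨p, x⟩, hx⟩
      obtain ⟨h, hd⟩ := (hle' _ _).1 hx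
      exact Subtype.ext (congrArg (Sigma.mk p) hd)
    right_inv := fun p => rfl
    map_rel_iff' := by
      rintro ⟨⟨p₁, x₁⟩, h1⟩ ⟨⟨p₂, x₂⟩, h2⟩
      obtain ⟨hq1, hd1⟩ := (hle' _ _).1 h1
      obtain ⟨hq2, hd2⟩ := (hle' _ _).1 h2
      constructor
      · intro hle
        rw [hle']
        exact ⟨hle, by rw [← hd1, ← hd2, Dcomp]⟩
      · intro hle
        exact ((hle' _ _).1 hle).elim fun h _ => h }
  refine ⟨⟨e⟩, ?_⟩
  obtain ⟨m, ⟨g⟩⟩ := hP q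
  exact ⟨m, ⟨e.trans g⟩⟩
end

section
/- Let P = ℱ(Δ^{n-1}) be the poset of nonempty faces of the (n−1)-simplex and D : P* → FinSet a diagram whose corresponding sheaf is inhabited (D(J) ≠ ∅ for all J) and flabby. Suppose I₀ is a minimal face with |D(I₀)| ≥ 2, and D(I₀) = A₁ ⊔ A₂ with A₁, A₂ nonempty. Define subdiagrams D_ε(J) = D(J ≥ I₀)⁻¹(A_ε) for J ≥ I₀ and D_ε(J) = D(J) otherwise (ε = 1, 2). Then the sheaves corresponding to D₁ and D₂ are both inhabited and flabby. -/
/-- A (sub)complex of the `(n-1)`-simplex on the vertex set `Fin n`: a collection of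
nonempty faces closed under passing to nonempty subsets.  These are exactly the open
sets of the Alexandrov topology on the dual of the face poset `ℱ(Δ^{n-1})`. -/
def IsSubcx (n : ℕ) (U : Set (Finset (Fin n))) : Prop :=
  (∀ J ∈ U, J.Nonempty) ∧
    ∀ J ∈ U, ∀ K : Finset (Fin n), K.Nonempty → K ⊆ J → K ∈ U

/-- The sections over an open set (subcomplex) `U` of the sheaf corresponding to a
diagram `D` on the dual face poset: compatible families of elements of the stalks. -/
def Sect (n : ℕ) (D : Finset (Fin n) → Type)
    (Dmap : ∀ {J K : Finset (Fin n)}, J ⊆ K → D K → D J)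
    (U : Set (Finset (Fin n))) : Type :=
  {v : ∀ J ∈ U, D J //
    ∀ (J K : Finset (Fin n)) (hJ : J ∈ U) (hK : K ∈ U) (h : J ⊆ K),
      Dmap h (v K hK) = v J hJ}

/-- The sections over `U` of the subdiagram `D_A` of `D` determined by a subset
`A ⊆ D(I₀)`: compatible families whose restriction to `I₀` (whenever defined) lies
in `A`. -/
def SectIn (n : ℕ) (D : Finset (Fin n) → Type)
    (Dmap : ∀ {J K : Finset (Fin n)}, J ⊆ K → D K → D J)
    (I₀ : Finset (Fin n)) (A : Set (D I₀)) (U : Set (Finset (Fin n))) : Type :=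
  {v : ∀ J ∈ U, D J //
    (∀ (J K : Finset (Fin n)) (hJ : J ∈ U) (hK : K ∈ U) (h : J ⊆ K),
      Dmap h (v K hK) = v J hJ) ∧
    ∀ (J : Finset (Fin n)) (hJ : J ∈ U) (h : I₀ ⊆ J), Dmap h (v J hJ) ∈ A}

/-- Let `P = ℱ(Δ^{n-1})` and `D` a diagram of finite sets on `P*` whose
corresponding sheaf is inhabited (all stalks nonempty) and flabby (every section over a
subcomplex extends to any larger subcomplex).  Let `I₀` be a minimal face with
`|D(I₀)| ≥ 2` (all proper nonempty faces of `I₀` have singleton stalks), and let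
`D(I₀) = A₁ ⊔ A₂` with `A₁, A₂` nonempty.  Then for each of the two subdiagrams
`D₁, D₂` (with `D_ε(J) = D(J ≥ I₀)⁻¹(A_ε)` for `J ⊇ I₀` and `D_ε(J) = D(J)` otherwise)
the corresponding sheaf is again inhabited and flabby. -/
theorem stmt_15 (n : ℕ) (D : Finset (Fin n) → Type) [∀ J, Fintype (D J)]
    (Dmap : ∀ {J K : Finset (Fin n)}, J ⊆ K → D K → D J)
    (Did : ∀ (J : Finset (Fin n)) (x : D J), Dmap subset_rfl x = x)
    (Dcomp : ∀ {J K L : Finset (Fin n)} (h1 : J ⊆ K) (h2 : K ⊆ L) (x : D L),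
      Dmap h1 (Dmap h2 x) = Dmap (h1.trans h2) x)
    (hinh : ∀ J : Finset (Fin n), J.Nonempty → Nonempty (D J))
    (hflabby : ∀ (U V : Set (Finset (Fin n))), IsSubcx n U → IsSubcx n V →
      ∀ hVU : V ⊆ U, ∀ w : Sect n D Dmap V, ∃ v : Sect n D Dmap U,
        ∀ (J : Finset (Fin n)) (hJ : J ∈ V), v.1 J (hVU hJ) = w.1 J hJ)
    (I₀ : Finset (Fin n)) (hI₀ : I₀.Nonempty)
    (hbig : ∃ x y : D I₀, x ≠ y)
    (hmin : ∀ J : Finset (Fin n), J ⊆ I₀ → J ≠ I₀ → J.Nonempty →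
      ∀ x y : D J, x = y)
    (A₁ A₂ : Set (D I₀)) (hA₁ : A₁.Nonempty) (hA₂ : A₂.Nonempty)
    (hdisj : Disjoint A₁ A₂) (hcover : A₁ ∪ A₂ = Set.univ) :
    ∀ A : Set (D I₀), A = A₁ ∨ A = A₂ →
      (∀ J : Finset (Fin n), J.Nonempty →
        Nonempty {x : D J // ∀ h : I₀ ⊆ J, Dmap h x ∈ A}) ∧
      (∀ (U V : Set (Finset (Fin n))), IsSubcx n U → IsSubcx n V →
        ∀ hVU : V ⊆ U, ∀ w : SectIn n D Dmap I₀ A V,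
          ∃ v : SectIn n D Dmap I₀ A U,
            ∀ (J : Finset (Fin n)) (hJ : J ∈ V), v.1 J (hVU hJ) = w.1 J hJ) := by
    classical
  intro A hA
  have hAne : A.Nonempty := by rcases hA with rfl | rfl <;> assumption
  have DidA : ∀ (h : I₀ ⊆ I₀) (x : D I₀), Dmap h x = x := fun h x => Did I₀ x
  -- Main lemma: flabbiness of the subsheaf
  have main : ∀ (U V : Set (Finset (Fin n))), IsSubcx n U → IsSubcx n V →
      ∀ hVU : V ⊆ U, ∀ w : SectIn n D Dmap I₀ A V,
        ∃ v : SectIn n D Dmap I₀ A U,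
          ∀ (J : Finset (Fin n)) (hJ : J ∈ V), v.1 J (hVU hJ) = w.1 J hJ := by
    intro U V hU hV hVU w
    by_cases hI₀U : I₀ ∈ U
    · -- choose a ∈ A compatible with w
      obtain ⟨a, haA, haw⟩ : ∃ a : D I₀, a ∈ A ∧ ∀ hI : I₀ ∈ V, w.1 I₀ hI = a := by
        by_cases hIV : I₀ ∈ V
        · refine ⟨w.1 I₀ hIV, ?_, fun _ => rfl⟩
          have this2 : Dmap subset_rfl (w.1 I₀ hIV) ∈ A := w.2.2 I₀ hIV subset_rfl
          rwa [DidA] at this2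
        · exact ⟨hAne.choose, hAne.choose_spec, fun hI => absurd hI hIV⟩
      set V' : Set (Finset (Fin n)) := V ∪ {K | K.Nonempty ∧ K ⊆ I₀} with hV'def
      have hsub : ∀ J ∈ V', J ∉ V → J ⊆ I₀ := fun J hJ h => (hJ.resolve_left h).2
      have hne : ∀ J ∈ V', J.Nonempty := by
        rintro J (hJ | hJ)
        · exact hV.1 J hJ
        · exact hJ.1
      have hV'cx : IsSubcx n V' := by
        constructor
        · exact hne
        · rintro J (hJ | hJ) K hKne hKJ
          · exact Or.inl (hV.2 J hJ K hKne hKJ)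
          · exact Or.inr ⟨hKne, hKJ.trans hJ.2⟩
      have hV'U : V' ⊆ U := by
        rintro J (hJ | hJ)
        · exact hVU hJ
        · exact hU.2 I₀ hI₀U J hJ.1 hJ.2
      -- the extended section on V'
      let f : ∀ J ∈ V', D J := fun J hJ =>
        if h : J ∈ V then w.1 J h else Dmap (hsub J hJ h) a
      have fV : ∀ (J : Finset (Fin n)) (hJ : J ∈ V) (hJ' : J ∈ V'),
          f J hJ' = w.1 J hJ := by
        intro J hJ hJ'; simp only [f, dif_pos hJ]
      have fnV : ∀ (J : Finset (Fin n)) (hJ' : J ∈ V') (h : J ∉ V),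
          f J hJ' = Dmap (hsub J hJ' h) a := by
        intro J hJ' h; simp only [f, dif_neg h]
      have fI₀ : ∀ hI : I₀ ∈ V', f I₀ hI = a := by
        intro hI
        by_cases h : I₀ ∈ V
        · rw [fV I₀ h hI]; exact haw h
        · rw [fnV I₀ hI h]
          exact DidA _ a
      have fcompat : ∀ (J K : Finset (Fin n)) (hJ : J ∈ V') (hK : K ∈ V')
          (h : J ⊆ K), Dmap h (f K hK) = f J hJ := by
        intro J K hJ hK h
        by_cases hKV : K ∈ V
        · have hJV : J ∈ V := hV.2 K hKV J (hne J hJ) h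
          rw [fV K hKV hK, fV J hJV hJ]
          exact w.2.1 J K hJV hKV h
        · have hKI : K ⊆ I₀ := hsub K hK hKV
          rw [fnV K hK hKV]
          by_cases hJV : J ∈ V
          · rw [fV J hJV hJ]
            have hJI : J ⊆ I₀ := h.trans hKI
            have hJne : J ≠ I₀ := by
              rintro rfl
              exact hKV ((hKI.antisymm h) ▸ hJV)
            exact hmin J hJI hJne (hne J hJ) _ _
          · rw [fnV J hJ hJV, Dcomp]
      -- extend the plain section
      obtain ⟨v, hv⟩ := hflabby U V' hU hV'cx hV'U ⟨f, fcompat⟩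
      have hI₀V' : I₀ ∈ V' := Or.inr ⟨hI₀, subset_rfl⟩
      have hvI₀ : v.1 I₀ (hV'U hI₀V') = a := by rw [hv I₀ hI₀V']; exact fI₀ hI₀V'
      refine ⟨⟨v.1, v.2, ?_⟩, ?_⟩
      · intro J hJ h
        have := v.2 I₀ J (hV'U hI₀V') hJ h
        rw [this, hvI₀]; exact haA
      · intro J hJ
        have hJ' : J ∈ V' := Or.inl hJ
        rw [hv J hJ']; exact fV J hJ hJ'
    · -- I₀ ∉ U : the condition is vacuous
      obtain ⟨v, hv⟩ := hflabby U V hU hV hVU ⟨w.1, w.2.1⟩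
      refine ⟨⟨v.1, v.2, ?_⟩, hv⟩
      intro J hJ h
      exact absurd (hU.2 J hJ I₀ hI₀ h) hI₀U
  refine ⟨?_, main⟩
  -- inhabitedness, from flabbiness applied to V = ∅
  intro J hJne
  have hUcx : IsSubcx n {K | K.Nonempty ∧ K ⊆ J} :=
    ⟨fun K hK => hK.1, fun K hK L hLne hLK => ⟨hLne, hLK.trans hK.2⟩⟩
  have hVcx : IsSubcx n (∅ : Set (Finset (Fin n))) :=
    ⟨fun K hK => absurd hK (Set.notMem_empty K),
     fun K hK => absurd hK (Set.notMem_empty K)⟩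
  have w : SectIn n D Dmap I₀ A (∅ : Set (Finset (Fin n))) :=
    ⟨fun K hK => absurd hK (Set.notMem_empty K),
     ⟨fun K L hK => absurd hK (Set.notMem_empty K),
      fun K hK => absurd hK (Set.notMem_empty K)⟩⟩
  obtain ⟨v, -⟩ := main {K | K.Nonempty ∧ K ⊆ J} ∅ hUcx hVcx (Set.empty_subset _) w
  have hJU : J ∈ {K | K.Nonempty ∧ K ⊆ J} := ⟨hJne, subset_rfl⟩
  exact ⟨⟨v.1 J hJU, fun h => v.2.2 J hJU h⟩⟩
end

section
/- In the setting of the splitting D(I₀) = A₁ ⊔ A₂ with subdiagrams D₁, D₂ of D over P = ℱ(Δ^{n-1}), the inflations satisfy P_D = P_{D₁} ∪ P_{D₂} and P_{D₁} ∩ P_{D₂} = P_{D₁₂}, where D₁₂ is the restriction of D to the open subcomplex K(I₀) = { J : J ⊉ I₀ }. -/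
/-- Let `P = ℱ(Δ^{n-1})` (nonempty faces of the simplex on `Fin n`) and
`D` a diagram of finite sets on `P*`, with `D(I₀) = A₁ ⊔ A₂` (`A₁, A₂` nonempty,
disjoint, covering).  The inflation `P_D` is realized as the set of pairs
`(J, d)` with `J` a nonempty face and `d ∈ D(J)`; the inflations along the subdiagrams
`D₁, D₂` (where `D_ε(J) = D(J ≥ I₀)⁻¹(A_ε)` for `J ⊇ I₀`, `D(J)` otherwise) are the
corresponding subsets.  Then `P_D = P_{D₁} ∪ P_{D₂}`, and
`P_{D₁} ∩ P_{D₂} = P_{D₁₂}`, where `D₁₂` is the restriction of `D` to the open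
subcomplex `K(I₀) = { J : J ⊉ I₀ }` (so `P_{D₁₂}` consists of the pairs `(J, d)` with
`J ⊉ I₀`). -/
theorem stmt_16 (n : ℕ) (D : Finset (Fin n) → Type) [∀ J, Fintype (D J)]
    (Dmap : ∀ {J K : Finset (Fin n)}, J ⊆ K → D K → D J)
    (Did : ∀ (J : Finset (Fin n)) (x : D J), Dmap subset_rfl x = x)
    (Dcomp : ∀ {J K L : Finset (Fin n)} (h1 : J ⊆ K) (h2 : K ⊆ L) (x : D L),
      Dmap h1 (Dmap h2 x) = Dmap (h1.trans h2) x)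
    (I₀ : Finset (Fin n)) (hI₀ : I₀.Nonempty)
    (A₁ A₂ : Set (D I₀)) (hA₁ : A₁.Nonempty) (hA₂ : A₂.Nonempty)
    (hdisj : Disjoint A₁ A₂) (hcover : A₁ ∪ A₂ = Set.univ) :
    ({p : Σ J : Finset (Fin n), D J | p.1.Nonempty} =
      {p : Σ J : Finset (Fin n), D J |
        p.1.Nonempty ∧ ∀ h : I₀ ⊆ p.1, Dmap h p.2 ∈ A₁} ∪
      {p : Σ J : Finset (Fin n), D J |
        p.1.Nonempty ∧ ∀ h : I₀ ⊆ p.1, Dmap h p.2 ∈ A₂}) ∧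
    ({p : Σ J : Finset (Fin n), D J |
        p.1.Nonempty ∧ ∀ h : I₀ ⊆ p.1, Dmap h p.2 ∈ A₁} ∩
      {p : Σ J : Finset (Fin n), D J |
        p.1.Nonempty ∧ ∀ h : I₀ ⊆ p.1, Dmap h p.2 ∈ A₂} =
      {p : Σ J : Finset (Fin n), D J | p.1.Nonempty ∧ ¬ I₀ ⊆ p.1}) := by
  constructor
  · ext p
    simp only [Set.mem_setOf_eq, Set.mem_union]
    constructor
    · intro hp
      by_cases h : I₀ ⊆ p.1
      · have : Dmap h p.2 ∈ A₁ ∪ A₂ := by rw [hcover]; trivial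
        rcases this with h1 | h2
        · exact Or.inl ⟨hp, fun h' => by
            have : Dmap h' p.2 = Dmap h p.2 := rfl
            rwa [this]⟩
        · exact Or.inr ⟨hp, fun h' => by
            have : Dmap h' p.2 = Dmap h p.2 := rfl
            rwa [this]⟩
      · exact Or.inl ⟨hp, fun h' => absurd h' h⟩
    · rintro (⟨hp, _⟩ | ⟨hp, _⟩) <;> exact hp
  · ext p
    simp only [Set.mem_setOf_eq, Set.mem_inter_iff]
    constructor
    · rintro ⟨⟨hp, h1⟩, ⟨_, h2⟩⟩
      refine ⟨hp, fun h => ?_⟩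
      exact hdisj.ne_of_mem (h1 h) (h2 h) rfl
    · rintro ⟨hp, h⟩
      exact ⟨⟨hp, fun h' => absurd h' h⟩, ⟨hp, fun h' => absurd h' h⟩⟩
end
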